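/- Let G be a finite abelian group, H a subgroup of G, d₁, d₂ ≥ 1 integers, and let W ⊆ ℤ be a nonempty set of weights that is multiplicatively closed modulo exp(G). Then (1) s_{W,≤d₁d₂}(G) ≤ d₂·(s_{W,≤d₁}(H) − 1) + s_{W,≤d₂}(G/H), and (2) s_{W,{d₁d₂}}(G) ≤ d₂·(s_{W,{d₁}}(H) − 1) + s_{W,{d₂}}(G/H) (in each case with the convention that the right-hand side is ∞ if one of its terms is ∞). -/

import Mathlib

open scoped BigOperators

/-- `l` encodes a `W`-weighted zero-subsum of the sequence (multiset) `S`: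
a nonempty list of (weight, group element) pairs with weights in `W`, whose
group elements form a sub-multiset of `S` and whose weighted sum is zero. -/
def IsWZeroSubsum {G : Type*} [AddCommGroup G] (W : Set ℤ) (S : Multiset G)
    (l : List (ℤ × G)) : Prop :=
  l ≠ [] ∧ (∀ p ∈ l, p.1 ∈ W) ∧ (↑(l.map Prod.snd) : Multiset G) ≤ S ∧
    (l.map fun p => p.1 • p.2).sum = 0

/-- `S` has a `W`-weighted zero-subsum whose length lies in `L`. -/
def HasWZeroSubsumLen {G : Type*} [AddCommGroup G] (W : Set ℤ) (S : Multiset G)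
    (L : Set ℕ) : Prop :=
  ∃ l : List (ℤ × G), IsWZeroSubsum W S l ∧ l.length ∈ L

/-- `S` has `m` pairwise disjoint `W`-weighted zero-subsums. -/
def HasDisjointWZeroSubsums {G : Type*} [AddCommGroup G] (W : Set ℤ) (S : Multiset G)
    (m : ℕ) : Prop :=
  ∃ ls : List (List (ℤ × G)), ls.length = m ∧
    (∀ l ∈ ls, l ≠ [] ∧ (∀ p ∈ l, p.1 ∈ W) ∧ (l.map fun p => p.1 • p.2).sum = 0) ∧
    (↑(ls.flatten.map Prod.snd) : Multiset G) ≤ S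

/-- The `m`-wise `W`-weighted Davenport constant `D_{W,m}(G)`. -/
noncomputable def DW (W : Set ℤ) (G : Type*) [AddCommGroup G] (m : ℕ) : ℕ :=
  sInf {n : ℕ | ∀ S : Multiset G, n ≤ Multiset.card S → HasDisjointWZeroSubsums W S m}

/-- The `L`-constrained `W`-weighted Davenport constant `s_{W,L}(G)`, valued in `ℕ∞`. -/
noncomputable def sWL (W : Set ℤ) (G : Type*) [AddCommGroup G] (L : Set ℕ) : ℕ∞ :=
  sInf {N : ℕ∞ | ∃ n : ℕ, N = (n : ℕ∞) ∧
    ∀ S : Multiset G, n ≤ Multiset.card S → HasWZeroSubsumLen W S L}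

/-- The `d`-constrained `W`-weighted Davenport constant `s_{W,≤d}(G)`. -/
noncomputable def sWle (W : Set ℤ) (G : Type*) [AddCommGroup G] (d : ℕ) : ℕ∞ :=
  sWL W G {t | 1 ≤ t ∧ t ≤ d}

/-- `e_W(G)`: the smallest `t ≥ 1` such that some `t` weights from `W` sum to a
multiple of `exp(G)`. -/
noncomputable def eW (W : Set ℤ) (G : Type*) [AddCommGroup G] : ℕ :=
  sInf {t : ℕ | 1 ≤ t ∧ ∃ w : Fin t → ℤ, (∀ i, w i ∈ W) ∧
    ((AddMonoid.exponent G : ℤ) ∣ ∑ i, w i)}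

/-- `W` is multiplicatively closed modulo `n`. -/
def MulClosedMod (W : Set ℤ) (n : ℕ) : Prop :=
  ∀ w ∈ W, ∀ w' ∈ W, ∃ u ∈ W, (n : ℤ) ∣ w * w' - u

section Aux

variable {α β : Type*}

private lemma bind_mono' (f : α → Multiset β) {s t : Multiset α} (h : s ≤ t) :
    s.bind f ≤ t.bind f := by
  obtain ⟨u, rfl⟩ := Multiset.le_iff_exists_add.mp h
  rw [Multiset.add_bind]
  exact le_add_right le_rfl

private lemma coe_flatten_snd {γ : Type*} (ls : List (List (ℤ × γ))) :
    (↑(ls.flatten.map Prod.snd) : Multiset γ)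
      = (↑ls : Multiset (List (ℤ × γ))).bind (fun l => ↑(l.map Prod.snd)) := by
  induction ls with
  | nil => simp
  | cons l rest ih => simp [ih, List.flatMap_def]

private lemma lift_list (f : α → β) :
    ∀ (L : List (ℤ × β)) (S : Multiset α),
      (↑(L.map Prod.snd) : Multiset β) ≤ S.map f →
      ∃ L' : List (ℤ × α), L'.map (fun p => (p.1, f p.2)) = L ∧
        (↑(L'.map Prod.snd) : Multiset α) ≤ S := by
  intro L
  induction L with
  | nil => exact fun S _ => ⟨[], rfl, by simp⟩
  | cons q L ih =>
    intro S hle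
    have hmem : q.2 ∈ S.map f := by
      refine Multiset.mem_of_le hle ?_
      simp
    obtain ⟨a, haS, hfa⟩ := Multiset.mem_map.mp hmem
    obtain ⟨S', rfl⟩ := Multiset.exists_cons_of_mem haS
    have hle' : (↑(L.map Prod.snd) : Multiset β) ≤ S'.map f := by
      have h1 : (↑((q :: L).map Prod.snd) : Multiset β) = q.2 ::ₘ ↑(L.map Prod.snd) := by
        simp
      rw [h1, Multiset.map_cons, ← hfa] at hle
      exact (Multiset.cons_le_cons_iff _).mp hle
    obtain ⟨L', hmap, hsub⟩ := ih S' hle'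
    refine ⟨(q.1, a) :: L', by simp [hmap, hfa], ?_⟩
    simpa using Multiset.cons_le_cons a hsub

private lemma lift_list2 (f : α → β) :
    ∀ (ls : List (List (ℤ × β))) (S : Multiset α),
      (↑(ls.flatten.map Prod.snd) : Multiset β) ≤ S.map f →
      ∃ ls' : List (List (ℤ × α)),
        ls'.map (List.map fun p => (p.1, f p.2)) = ls ∧
        (↑(ls'.flatten.map Prod.snd) : Multiset α) ≤ S := by
  intro ls
  induction ls with
  | nil => exact fun S _ => ⟨[], rfl, by simp⟩
  | cons l rest ih =>
    intro S hle
    have hsplit : (↑(((l :: rest).flatten).map Prod.snd) : Multiset β)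
        = ↑(l.map Prod.snd) + ↑(rest.flatten.map Prod.snd) := by simp
    rw [hsplit] at hle
    have hle1 : (↑(l.map Prod.snd) : Multiset β) ≤ S.map f :=
      le_trans (le_add_right le_rfl) hle
    obtain ⟨l', hmap1, hsub1⟩ := lift_list f l S hle1
    obtain ⟨u, hu⟩ := Multiset.le_iff_exists_add.mp hsub1
    have hmapsnd : (Multiset.map f ↑(l'.map Prod.snd)) = (↑(l.map Prod.snd) : Multiset β) := by
      rw [← hmap1]
      simp [Multiset.map_coe, List.map_map, Function.comp_def]
    have hle2 : (↑(rest.flatten.map Prod.snd) : Multiset β) ≤ u.map f := by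
      rw [hu, Multiset.map_add, hmapsnd] at hle
      exact (add_le_add_iff_left _).mp hle
    obtain ⟨rest', hmap2, hsub2⟩ := ih u hle2
    refine ⟨l' :: rest', by simp [hmap1, hmap2], ?_⟩
    have h2 : (↑(((l' :: rest').flatten).map Prod.snd) : Multiset α)
        = ↑(l'.map Prod.snd) + ↑(rest'.flatten.map Prod.snd) := by simp
    rw [h2, hu]
    exact add_le_add le_rfl hsub2

private lemma extract {Q : Type*} [AddCommGroup Q] (W : Set ℤ) (L₂ : Set ℕ) (d₂ n₂ : ℕ)
    (hb : ∀ t ∈ L₂, t ≤ d₂)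
    (hP : ∀ T : Multiset Q, n₂ ≤ Multiset.card T → HasWZeroSubsumLen W T L₂) :
    ∀ (k : ℕ) (S : Multiset Q), d₂ * k + n₂ ≤ Multiset.card S →
      ∃ ls : List (List (ℤ × Q)), ls.length = k + 1 ∧
        (∀ l ∈ ls, l ≠ [] ∧ (∀ p ∈ l, p.1 ∈ W) ∧
          (l.map fun p => p.1 • p.2).sum = 0 ∧ l.length ∈ L₂) ∧
        (↑(ls.flatten.map Prod.snd) : Multiset Q) ≤ S := by
  intro k
  induction k with
  | zero =>
    intro S hS
    obtain ⟨l, ⟨hne, hw, hsub, hsum⟩, hlen⟩ := hP S (by omega)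
    refine ⟨[l], rfl, ?_, by simpa using hsub⟩
    intro l' hl'
    simp only [List.mem_singleton] at hl'
    subst hl'
    exact ⟨hne, hw, hsum, hlen⟩
  | succ k ih =>
    intro S hS
    obtain ⟨l, ⟨hne, hw, hsub, hsum⟩, hlen⟩ := hP S (by omega)
    obtain ⟨u, hu⟩ := Multiset.le_iff_exists_add.mp hsub
    have hcard : d₂ * k + n₂ ≤ Multiset.card u := by
      have h1 : l.length ≤ d₂ := hb _ hlen
      have h2 := congrArg Multiset.card hu
      simp only [Multiset.card_add, Multiset.coe_card, List.length_map] at h2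
      have h3 : d₂ * (k + 1) = d₂ * k + d₂ := by ring
      omega
    obtain ⟨ls', hlen', hprop', hsub'⟩ := ih u hcard
    refine ⟨l :: ls', by simp [hlen'], ?_, ?_⟩
    · intro l'' hl''
      rcases List.mem_cons.mp hl'' with h | h
      · subst h; exact ⟨hne, hw, hsum, hlen⟩
      · exact hprop' _ h
    · have h2 : (↑(((l :: ls').flatten).map Prod.snd) : Multiset Q)
          = ↑(l.map Prod.snd) + ↑(ls'.flatten.map Prod.snd) := by simp
      rw [h2, hu]
      exact add_le_add le_rfl hsub'

end Aux

private lemma main_step {G : Type*} [AddCommGroup G] [Fintype G] (W : Set ℤ) (hW : W.Nonempty)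
    (H : AddSubgroup G) (L₁ L₂ L : Set ℕ) (d₂ n₁ n₂ : ℕ) (hn₁ : 1 ≤ n₁)
    (hb : ∀ t ∈ L₂, t ≤ d₂)
    (hsum : ∀ ns : List ℕ, ns.length ∈ L₁ → (∀ s ∈ ns, s ∈ L₂) → ns.sum ∈ L)
    (hmul : MulClosedMod W (AddMonoid.exponent G))
    (h₁ : ∀ T : Multiset H, n₁ ≤ Multiset.card T → HasWZeroSubsumLen W T L₁)
    (h₂ : ∀ T : Multiset (G ⧸ H), n₂ ≤ Multiset.card T → HasWZeroSubsumLen W T L₂)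
    (S : Multiset G) (hS : d₂ * (n₁ - 1) + n₂ ≤ Multiset.card S) :
    HasWZeroSubsumLen W S L := by
  classical
  set f : G → G ⧸ H := fun g => QuotientAddGroup.mk g with hf
  have hScard : d₂ * (n₁ - 1) + n₂ ≤ Multiset.card (S.map f) := by simpa using hS
  obtain ⟨ls, hlslen, hlsprop, hlssub⟩ := extract W L₂ d₂ n₂ hb h₂ (n₁ - 1) (S.map f) hScard
  obtain ⟨ls', hmap, hsub⟩ := lift_list2 f ls S hlssub
  -- basic facts about the lifted lists
  have key : ∀ l' ∈ ls', l' ≠ [] ∧ (∀ p ∈ l', p.1 ∈ W) ∧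
      ((l'.map fun p => p.1 • p.2).sum ∈ H) ∧ l'.length ∈ L₂ := by
    intro l' hl'
    have hmem : l'.map (fun p => (p.1, f p.2)) ∈ ls := by
      rw [← hmap]; exact List.mem_map_of_mem hl'
    obtain ⟨hne, hwts, h0, hlen⟩ := hlsprop _ hmem
    refine ⟨?_, ?_, ?_, ?_⟩
    · intro h; subst h; simp at hne
    · intro p hp
      exact hwts _ (List.mem_map_of_mem hp)
    · have hh := h0
      rw [List.map_map] at hh
      have heq : ((fun p => p.1 • p.2) ∘ fun p : ℤ × G => (p.1, f p.2))
          = ⇑(QuotientAddGroup.mk' H) ∘ (fun p : ℤ × G => p.1 • p.2) := by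
        funext p
        exact (map_zsmul (QuotientAddGroup.mk' H) p.1 p.2).symm
      rw [heq, ← List.map_map, ← map_list_sum (QuotientAddGroup.mk' H)] at hh
      exact (QuotientAddGroup.eq_zero_iff _).mp hh
    · simpa using hlen
  have hls'len : ls'.length = n₁ := by
    have := congrArg List.length hmap
    simp only [List.length_map] at this
    omega
  -- the sequence over H
  set F : List (ℤ × G) → H := fun l =>
    if h : ((l.map fun p => p.1 • p.2).sum ∈ H) then ⟨_, h⟩ else 0 with hF
  have hFval : ∀ l' ∈ ls', ((F l' : H) : G) = (l'.map fun p => p.1 • p.2).sum := by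
    intro l' hl'
    simp only [hF, dif_pos (key l' hl').2.2.1]
  obtain ⟨l'', ⟨hne'', hw'', hsub'', hsum''⟩, hlen''⟩ :=
    h₁ ((↑ls' : Multiset (List (ℤ × G))).map F) (by simpa [hls'len])
  obtain ⟨L', hLmap, hLsub⟩ := lift_list F l'' ↑ls' (by simpa using hsub'')
  have hL'mem : ∀ p ∈ L', p.2 ∈ ls' := by
    intro p hp
    have : p.2 ∈ (↑(L'.map Prod.snd) : Multiset (List (ℤ × G))) := by
      simp only [Multiset.mem_coe, List.mem_map]
      exact ⟨p, hp, rfl⟩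
    simpa using Multiset.mem_of_le hLsub this
  have hL'w : ∀ p ∈ L', p.1 ∈ W := by
    intro p hp
    have : (p.1, F p.2) ∈ l'' := by rw [← hLmap]; exact List.mem_map_of_mem hp
    exact hw'' _ this
  -- the weight-picking function
  obtain ⟨w₀, hw₀⟩ := hW
  have hpick : ∀ u w : ℤ, u ∈ W → w ∈ W →
      ∃ v, v ∈ W ∧ ((AddMonoid.exponent G : ℤ) ∣ u * w - v) := by
    intro u w hu hw'
    obtain ⟨v, hv, hd⟩ := hmul u hu w hw'
    exact ⟨v, hv, hd⟩
  set pick : ℤ → ℤ → ℤ := fun u w =>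
    if h : u ∈ W ∧ w ∈ W then (hpick u w h.1 h.2).choose else w₀ with hpickdef
  have pickW : ∀ u w : ℤ, u ∈ W → w ∈ W → pick u w ∈ W := by
    intro u w hu hw'
    simp only [hpickdef, dif_pos (And.intro hu hw')]
    exact (hpick u w hu hw').choose_spec.1
  have pickD : ∀ u w : ℤ, u ∈ W → w ∈ W →
      ((AddMonoid.exponent G : ℤ) ∣ u * w - pick u w) := by
    intro u w hu hw'
    simp only [hpickdef, dif_pos (And.intro hu hw')]
    exact (hpick u w hu hw').choose_spec.2
  have hsmul : ∀ (u w : ℤ) (g : G), u ∈ W → w ∈ W → pick u w • g = (u * w) • g := by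
    intro u w g hu hw'
    obtain ⟨c, hc⟩ := pickD u w hu hw'
    have h2 : (AddMonoid.exponent G : ℤ) • (c • g) = 0 := by
      have h3 := AddMonoid.exponent_nsmul_eq_zero (c • g)
      rw [← natCast_zsmul] at h3
      exact h3
    have h1 : (u * w) • g - pick u w • g = (AddMonoid.exponent G : ℤ) • (c • g) := by
      rw [← sub_smul, hc, mul_smul]
    rw [h2] at h1
    exact (sub_eq_zero.mp h1).symm
  have hinner : ∀ (u : ℤ) (l : List (ℤ × G)), u ∈ W → (∀ p ∈ l, p.1 ∈ W) →
      ((l.map fun q => (pick u q.1, q.2)).map fun p => p.1 • p.2).sum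
        = u • (l.map fun p => p.1 • p.2).sum := by
    intro u l hu
    induction l with
    | nil => intro _; simp
    | cons q l ih =>
      intro hl
      have h1 := ih (fun p hp => hl p (List.mem_cons_of_mem _ hp))
      simp only [List.map_cons, List.sum_cons, smul_add, h1]
      rw [hsmul u q.1 q.2 hu (hl q List.mem_cons_self), mul_smul]
  have hL'len : L'.length = l''.length := by
    have := congrArg List.length hLmap
    simpa using this
  refine ⟨L'.flatMap fun p => p.2.map fun q => (pick p.1 q.1, q.2), ⟨?_, ?_, ?_, ?_⟩, ?_⟩
  · -- nonempty
    apply List.ne_nil_of_length_pos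
    cases L' with
    | nil =>
      exact absurd (by simpa using hLmap.symm) hne''
    | cons p L2 =>
      have hp2 : p.2 ∈ ls' := hL'mem p List.mem_cons_self
      have hpne : p.2 ≠ [] := (key _ hp2).1
      have hplen : 0 < p.2.length := List.length_pos_iff.mpr hpne
      simp only [List.flatMap_cons, List.length_append, List.length_map]
      omega
  · -- weights
    intro p hp
    rw [List.mem_flatMap] at hp
    obtain ⟨a, ha, hp2⟩ := hp
    rw [List.mem_map] at hp2
    obtain ⟨q, hq, rfl⟩ := hp2
    exact pickW _ _ (hL'w a ha) ((key a.2 (hL'mem a ha)).2.1 q hq)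
  · -- containment
    have e1 : ∀ M : List (ℤ × List (ℤ × G)),
        (↑((M.flatMap fun p => p.2.map fun q => (pick p.1 q.1, q.2)).map Prod.snd) : Multiset G)
          = (↑(M.map Prod.snd) : Multiset (List (ℤ × G))).bind (fun l => ↑(l.map Prod.snd)) := by
      intro M
      induction M with
      | nil => simp
      | cons p rest ih =>
        simp only [List.flatMap_cons, List.map_append, List.map_cons, List.map_map]
        rw [← Multiset.coe_add, ← Multiset.cons_coe, Multiset.cons_bind, ih]
        simp [Function.comp_def]
    rw [e1 L']
    calc (↑(L'.map Prod.snd) : Multiset (List (ℤ × G))).bind (fun l => ↑(l.map Prod.snd))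
        ≤ (↑ls' : Multiset (List (ℤ × G))).bind (fun l => ↑(l.map Prod.snd)) :=
          bind_mono' _ hLsub
      _ = ↑(ls'.flatten.map Prod.snd) := (coe_flatten_snd ls').symm
      _ ≤ S := hsub
  · -- sum is zero
    have e2 : ∀ M : List (ℤ × List (ℤ × G)), (∀ p ∈ M, p.1 ∈ W ∧ ∀ q ∈ p.2, q.1 ∈ W) →
        ((M.flatMap fun p => p.2.map fun q => (pick p.1 q.1, q.2)).map fun p => p.1 • p.2).sum
          = (M.map fun p => p.1 • ((p.2.map fun q => q.1 • q.2).sum)).sum := by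
      intro M
      induction M with
      | nil => intro _; simp
      | cons p rest ih =>
        intro hM
        have h1 := ih (fun a ha => hM a (List.mem_cons_of_mem _ ha))
        have h2 := hM p List.mem_cons_self
        simp only [List.flatMap_cons, List.map_append, List.sum_append, List.map_cons,
          List.sum_cons, h1]
        rw [hinner p.1 p.2 h2.1 h2.2]
    rw [e2 L' (fun p hp => ⟨hL'w p hp, (key p.2 (hL'mem p hp)).2.1⟩)]
    have e3 : (L'.map fun p => p.1 • ((p.2.map fun q => q.1 • q.2).sum)).sum
        = (H.subtype) ((l''.map fun p => p.1 • p.2).sum) := by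
      rw [map_list_sum (H.subtype), ← hLmap, List.map_map, List.map_map]
      refine congrArg List.sum (List.map_congr_left ?_)
      intro p hp
      show p.1 • ((p.2.map fun q => q.1 • q.2).sum) = H.subtype ((p.1, F p.2).1 • (p.1, F p.2).2)
      rw [map_zsmul]
      have hv := hFval p.2 (hL'mem p hp)
      simp only [AddSubgroup.coe_subtype] at *
      rw [hv]
    rw [e3, hsum'', map_zero]
  · -- length in L
    have hlenflat : ∀ M : List (ℤ × List (ℤ × G)),
        (M.flatMap fun p => p.2.map fun q => (pick p.1 q.1, q.2)).length
          = (M.map fun p => p.2.length).sum := by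
      intro M
      induction M with
      | nil => simp
      | cons p rest ih =>
        simp [List.flatMap_cons, ih]
    rw [hlenflat L']
    apply hsum
    · rw [List.length_map, hL'len]
      exact hlen''
    · intro s hs
      rw [List.mem_map] at hs
      obtain ⟨p, hp, rfl⟩ := hs
      exact (key p.2 (hL'mem p hp)).2.2.2


private lemma one_le_of_P {A : Type*} [AddCommGroup A] (W : Set ℤ) (L : Set ℕ) (n : ℕ)
    (h : ∀ S : Multiset A, n ≤ Multiset.card S → HasWZeroSubsumLen W S L) : 1 ≤ n := by
  by_contra h0
  push_neg at h0
  interval_cases n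
  obtain ⟨l, ⟨hne, _, hsub, _⟩, _⟩ := h 0 (by simp)
  have h1 : (↑(l.map Prod.snd) : Multiset A) = 0 := le_bot_iff.mp hsub
  have h2 : l.map Prod.snd = [] := by
    simpa using h1
  exact hne (List.map_eq_nil_iff.mp h2)

private lemma sWL_attain {A : Type*} [AddCommGroup A] (W : Set ℤ) (L : Set ℕ)
    (h : sWL W A L ≠ ⊤) : ∃ n : ℕ, sWL W A L = (n : ℕ∞) ∧
      ∀ S : Multiset A, n ≤ Multiset.card S → HasWZeroSubsumLen W S L := by
  set X := {N : ℕ∞ | ∃ n : ℕ, N = (n : ℕ∞) ∧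
    ∀ S : Multiset A, n ≤ Multiset.card S → HasWZeroSubsumLen W S L} with hX
  have hdef : sWL W A L = sInf X := rfl
  have hXne : X.Nonempty := by
    by_contra hx
    rw [Set.not_nonempty_iff_eq_empty] at hx
    rw [hdef, hx, sInf_empty] at h
    exact h rfl
  set A' := {n : ℕ | ∀ S : Multiset A, n ≤ Multiset.card S → HasWZeroSubsumLen W S L} with hA'
  have hA'ne : A'.Nonempty := by
    obtain ⟨N, n, rfl, hn⟩ := hXne
    exact ⟨n, hn⟩
  refine ⟨sInf A', ?_, Nat.sInf_mem hA'ne⟩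
  rw [hdef]
  apply le_antisymm
  · exact sInf_le ⟨sInf A', rfl, Nat.sInf_mem hA'ne⟩
  · apply le_sInf
    rintro N ⟨m, rfl, hm⟩
    exact_mod_cast Nat.sInf_le (show m ∈ A' from hm)

private lemma cast_formula (d₂ n₁ n₂ : ℕ) (hn₁ : 1 ≤ n₁) :
    ((d₂ * (n₁ - 1) + n₂ : ℕ) : ℕ∞) = (d₂ : ℕ∞) * ((n₁ : ℕ∞) - 1) + (n₂ : ℕ∞) := by
  have h1 : ((n₁ - 1 : ℕ) : ℕ∞) = (n₁ : ℕ∞) - 1 := by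
    rw [ENat.coe_sub, Nat.cast_one]
  rw [Nat.cast_add, Nat.cast_mul, h1]

private lemma stmt9_aux {G : Type*} [AddCommGroup G] [Fintype G] (W : Set ℤ) (hW : W.Nonempty)
    (H : AddSubgroup G) (d₂ : ℕ) (hd₂ : 1 ≤ d₂) (L₁ L₂ L : Set ℕ)
    (hb : ∀ t ∈ L₂, t ≤ d₂)
    (hsum : ∀ ns : List ℕ, ns.length ∈ L₁ → (∀ s ∈ ns, s ∈ L₂) → ns.sum ∈ L)
    (hmul : MulClosedMod W (AddMonoid.exponent G)) :
    sWL W G L ≤ (d₂ : ℕ∞) * (sWL W (↥H) L₁ - 1) + sWL W (G ⧸ H) L₂ := by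
  by_cases h1 : sWL W (↥H) L₁ = ⊤
  · have : (d₂ : ℕ∞) * (sWL W (↥H) L₁ - 1) + sWL W (G ⧸ H) L₂ = ⊤ := by
      rw [h1]
      have hd : (d₂ : ℕ∞) ≠ 0 := by
        simp only [ne_eq, Nat.cast_eq_zero]
        omega
      rw [ENat.top_sub_one, ENat.mul_top hd, top_add]
    rw [this]
    exact le_top
  by_cases h2 : sWL W (G ⧸ H) L₂ = ⊤
  · rw [h2, add_top]
    exact le_top
  obtain ⟨n₁, e₁, P₁⟩ := sWL_attain W L₁ h1
  obtain ⟨n₂, e₂, P₂⟩ := sWL_attain W L₂ h2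
  have hn₁ : 1 ≤ n₁ := one_le_of_P W L₁ n₁ P₁
  have key := main_step W hW H L₁ L₂ L d₂ n₁ n₂ hn₁ hb hsum hmul P₁ P₂
  have hle : sWL W G L ≤ ((d₂ * (n₁ - 1) + n₂ : ℕ) : ℕ∞) := sInf_le ⟨_, rfl, key⟩
  rw [e₁, e₂, ← cast_formula d₂ n₁ n₂ hn₁]
  exact hle

private lemma sum_const_list (c : ℕ) : ∀ ns : List ℕ, (∀ s ∈ ns, s = c) →
    ns.sum = ns.length * c := by
  intro ns
  induction ns with
  | nil => simp
  | cons a t ih =>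
    intro h
    have ha := h a List.mem_cons_self
    have ht := ih (fun s hs => h s (List.mem_cons_of_mem _ hs))
    simp only [List.sum_cons, List.length_cons, ha, ht]
    ring

/-- for `W` multiplicatively closed modulo `exp(G)` and `d₁, d₂ ≥ 1`:
(1) `s_{W,≤d₁d₂}(G) ≤ d₂(s_{W,≤d₁}(H) - 1) + s_{W,≤d₂}(G/H)`, and
(2) `s_{W,{d₁d₂}}(G) ≤ d₂(s_{W,{d₁}}(H) - 1) + s_{W,{d₂}}(G/H)` (in `ℕ∞`). -/
theorem stmt9 {G : Type*} [AddCommGroup G] [Fintype G] (W : Set ℤ) (hW : W.Nonempty)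
    (H : AddSubgroup G) (d₁ d₂ : ℕ) (hd₁ : 1 ≤ d₁) (hd₂ : 1 ≤ d₂)
    (hmul : MulClosedMod W (AddMonoid.exponent G)) :
    sWle W G (d₁ * d₂) ≤ ((d₂ : ℕ) : ℕ∞) * (sWle W (↥H) d₁ - 1) + sWle W (G ⧸ H) d₂ ∧
    sWL W G {d₁ * d₂} ≤ ((d₂ : ℕ) : ℕ∞) * (sWL W (↥H) {d₁} - 1) + sWL W (G ⧸ H) {d₂} := by
  constructor
  · refine stmt9_aux W hW H d₂ hd₂ _ _ _ (fun t ht => ht.2) ?_ hmul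
    intro ns hlen hmem
    constructor
    · -- 1 ≤ ns.sum
      cases ns with
      | nil => exact absurd hlen.1 (by simp)
      | cons a t =>
        have ha := hmem a List.mem_cons_self
        have : 1 ≤ a := ha.1
        simp only [List.sum_cons]
        omega
    · -- ns.sum ≤ d₁ * d₂
      have h1 : ns.sum ≤ ns.length * d₂ := by
        calc ns.sum ≤ ns.length • d₂ := List.sum_le_card_nsmul ns d₂ (fun x hx => (hmem x hx).2)
          _ = ns.length * d₂ := by simp
      calc ns.sum ≤ ns.length * d₂ := h1
        _ ≤ d₁ * d₂ := Nat.mul_le_mul_right _ hlen.2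
  · refine stmt9_aux W hW H d₂ hd₂ _ _ _ (fun t ht => le_of_eq ht) ?_ hmul
    intro ns hlen hmem
    have h1 : ns.sum = ns.length * d₂ := sum_const_list d₂ ns (fun s hs => hmem s hs)
    rw [Set.mem_singleton_iff] at hlen ⊢
    rw [h1, hlen]
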